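/- Let N ≥ 2, let Q_abs be the absorbing diffusion matrix with mask index m, and let c ∈ ℝ. For every vector x ∈ ℝ^N with ∑_i x_i = 1 and x_m = 0, the m-th component of the vector Matrix.exp (c • Q_abs) *ᵥ x equals 1 − exp(−c). In particular, this value does not depend on x. -/

import Mathlib

open Real Matrix

/-- The absorbing diffusion matrix on `N` categories (`N ≥ 2`), with mask index `m` the last
index: `(Q_abs)_{ii} = −1` for `i ≠ m`, `(Q_abs)_{mj} = 1` for `j ≠ m`, all other entries `0`. -/
def Qabs (N : ℕ) (m : Fin N) : Matrix (Fin N) (Fin N) ℝ :=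
  Matrix.of fun i j =>
    if i = j ∧ i ≠ m then -1
    else if i = m ∧ j ≠ m then 1
    else 0

lemma Qabs_sq (N : ℕ) (m : Fin N) : Qabs N m * Qabs N m = -(Qabs N m) := by
  ext i j
  simp only [Matrix.mul_apply, Qabs, Matrix.of_apply, Matrix.neg_apply]
  rcases eq_or_ne i m with hi | hi
  · rcases eq_or_ne j m with hj | hj
    · subst hi hj
      simp
    · subst hi
      rw [Finset.sum_eq_single j]
      · simp [hj, Ne.symm hj]
      · intro b _ hb
        by_cases hbm : b = i <;> simp [hbm, hb, hj, Ne.symm hj]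
      · simp
  · rw [Finset.sum_eq_single i]
    · by_cases hij : i = j <;> simp [hij, hi]
    · intro b _ hb
      simp [Ne.symm hb, hi]
    · simp

lemma Qabs_pow (N : ℕ) (m : Fin N) (n : ℕ) :
    Qabs N m ^ (n + 1) = ((-1 : ℝ) ^ n) • Qabs N m := by
  induction n with
  | zero => simp
  | succ k ih =>
    rw [pow_succ, ih, Matrix.smul_mul, Qabs_sq, pow_succ, smul_neg, ← neg_smul]
    congr 1
    ring

section
attribute [local instance] Matrix.linftyOpSemiNormedRing Matrix.linftyOpNormedRing
  Matrix.linftyOpNormedAlgebra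

lemma exp_Qabs (N : ℕ) (m : Fin N) (c : ℝ) :
    NormedSpace.exp (c • Qabs N m) = 1 + (1 - Real.exp (-c)) • Qabs N m := by
  rw [NormedSpace.exp_eq_tsum ℝ]
  beta_reduce
  have hs : Summable fun n : ℕ => ((n.factorial : ℝ)⁻¹) • (c • Qabs N m) ^ n :=
    NormedSpace.expSeries_summable' (𝕂 := ℝ) (c • Qabs N m)
  rw [Summable.tsum_eq_zero_add hs]
  simp only [pow_zero, Nat.factorial_zero, Nat.cast_one, inv_one, one_smul]
  congr 1
  have key : ∀ n : ℕ, (((n+1).factorial : ℝ)⁻¹) • (c • Qabs N m) ^ (n + 1)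
      = (-((((n+1).factorial : ℝ)⁻¹) * (-c) ^ (n + 1))) • Qabs N m := by
    intro n
    rw [smul_pow, Qabs_pow, smul_smul, smul_smul]
    congr 1
    rw [neg_pow]
    ring
  rw [tsum_congr key]
  have hs2 : Summable fun n : ℕ => -((((n+1).factorial : ℝ)⁻¹) * (-c) ^ (n + 1)) := by
    have h0 : Summable fun n : ℕ => ((n.factorial : ℝ)⁻¹) * (-c) ^ n := by
      simpa [smul_eq_mul] using NormedSpace.expSeries_summable' (𝕂 := ℝ) (-c)
    exact (((summable_nat_add_iff 1).mpr h0)).neg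
  rw [Summable.tsum_smul_const hs2]
  congr 1
  rw [tsum_neg]
  have he : Real.exp (-c) = 1 + ∑' n : ℕ, (((n+1).factorial : ℝ)⁻¹) * (-c) ^ (n + 1) := by
    have h0 : Summable fun n : ℕ => ((n.factorial : ℝ)⁻¹) * (-c) ^ n := by
      simpa [smul_eq_mul] using NormedSpace.expSeries_summable' (𝕂 := ℝ) (-c)
    rw [Real.exp_eq_exp_ℝ, NormedSpace.exp_eq_tsum ℝ]
    simp only [smul_eq_mul]
    rw [Summable.tsum_eq_zero_add h0]
    simp
  rw [he]
  ring

end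

/-- For every vector `x` with `∑ i, x i = 1` and `x m = 0`, the `m`-th component of
`exp (c • Q_abs) *ᵥ x` equals `1 − exp(−c)`, independently of `x`. -/
theorem mask_probability_independent (N : ℕ) (hN : 2 ≤ N) (m : Fin N) (hm : (m : ℕ) = N - 1)
    (c : ℝ) (x : Fin N → ℝ) (hsum : ∑ i, x i = 1) (hxm : x m = 0) :
    (NormedSpace.exp (c • Qabs N m) *ᵥ x) m = 1 - Real.exp (-c) := by

  rw [exp_Qabs, Matrix.add_mulVec, Matrix.smul_mulVec, Matrix.one_mulVec]
  have hQx : (Qabs N m *ᵥ x) m = 1 := by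
    have h1 : (Qabs N m *ᵥ x) m = ∑ j, (if j = m then 0 else x j) := by
      simp only [Matrix.mulVec, dotProduct, Qabs, Matrix.of_apply]
      refine Finset.sum_congr rfl fun j _ => ?_
      by_cases hj : j = m <;> simp [hj]
    have h2 : ∀ j : Fin N, (if j = m then 0 else x j) = x j - (if j = m then x j else 0) := by
      intro j; by_cases hj : j = m <;> simp [hj]
    rw [h1, Finset.sum_congr rfl fun j _ => h2 j, Finset.sum_sub_distrib,
      Finset.sum_ite_eq' Finset.univ m x]
    simp [hsum, hxm]
  simp [hxm, hQx]
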